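/- arXiv:1110.5395 — 5 statements merged into one kernel-verified Lean document; each statement's English description precedes it below -/
import Mathlib

section
/- Let k ≥ 3, let x₁, …, x_{k−1} be pairwise distinct nodes of V, let X = {x₁, …, x_{k−1}}, and assume V \ X is nonempty and C is nonempty. If for every y ∈ V \ X the probe (x₁, y, x₂, …, x_{k−1}) succeeds, then x₁ ∈ C and x_{k−1} ∈ C. -/
variable {V : Type*}

/-- Under the naive DoS attacker, a probe (an injective `k`-tuple of nodes)
probeSucceeds iff no node of the tuple is compromised, or both the first and last
nodes are compromised. -/
def probeSucceeds {k : ℕ} (hk : 0 < k) (C : Set V) (p : Fin k → V) : Prop :=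
  (∀ i, p i ∉ C) ∨ (p ⟨0, hk⟩ ∈ C ∧ p ⟨k - 1, by omega⟩ ∈ C)

/-- The probe `(x₁, y, x₂, …, x_{k-1})`: the node `y` is inserted in the second
position of the tuple `x₁, …, x_{k-1}`. -/
def probe1 {k : ℕ} (hk : 3 ≤ k) (x : Fin (k - 1) → V) (y : V) : Fin k → V :=
  fun i =>
    if (i : ℕ) = 0 then x ⟨0, by omega⟩
    else if (i : ℕ) = 1 then y
    else x ⟨(i : ℕ) - 1, by have := i.isLt; omega⟩

/-- If all probes `(x₁, y, x₂, …, x_{k-1})` with `y ∉ X` succeed (where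
`V \ X` and `C` are nonempty), then `x₁` and `x_{k-1}` are compromised. -/
theorem stmt0 [Fintype V] {k : ℕ} (hk : 3 ≤ k) (C : Set V)
    (x : Fin (k - 1) → V) (hx : Function.Injective x)
    (hVX : ∃ y, y ∉ Set.range x) (hC : C.Nonempty)
    (h : ∀ y, y ∉ Set.range x → probeSucceeds (by omega) C (probe1 hk x y)) :
    x ⟨0, by omega⟩ ∈ C ∧ x ⟨k - 2, by omega⟩ ∈ C := by
  obtain ⟨c, hc⟩ := hC
  have key : ∀ y, y ∉ Set.range x → (∃ i, probe1 hk x y i ∈ C) →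
      x ⟨0, by omega⟩ ∈ C ∧ x ⟨k - 2, by omega⟩ ∈ C := by
    rintro y hy ⟨i, hi⟩
    rcases h y hy with h1 | h2
    · exact absurd hi (h1 i)
    · obtain ⟨hA, hB⟩ := h2
      simp only [probe1] at hA hB
      rw [if_pos trivial] at hA
      rw [if_neg (by omega : ¬ (k - 1 = 0)), if_neg (by omega : ¬ (k - 1 = 1))] at hB
      refine ⟨hA, ?_⟩
      convert hB using 2 <;> simp only [Fin.ext_iff, Fin.val_mk] <;> omega
  by_cases hcx : c ∈ Set.range x
  · obtain ⟨j, hj⟩ := hcx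
    obtain ⟨y, hy⟩ := hVX
    apply key y hy
    by_cases hj0 : (j : ℕ) = 0
    · refine ⟨⟨0, by omega⟩, ?_⟩
      simp only [probe1, if_pos trivial]
      have : (⟨0, by omega⟩ : Fin (k - 1)) = j := by
        simp only [Fin.ext_iff, Fin.val_mk]; omega
      rw [this, hj]; exact hc
    · refine ⟨⟨(j : ℕ) + 1, by have := j.isLt; omega⟩, ?_⟩
      simp only [probe1]
      rw [if_neg (by omega), if_neg (by omega)]
      have : (⟨(j : ℕ) + 1 - 1, by have := j.isLt; omega⟩ : Fin (k - 1)) = j := by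
        simp only [Fin.ext_iff, Fin.val_mk]; omega
      rw [this, hj]; exact hc
  · apply key c hcx
    refine ⟨⟨1, by omega⟩, ?_⟩
    simp only [probe1]
    rw [if_neg (by omega), if_pos trivial]
    exact hc
end

section
/- Let k ≥ 3, let x₁, …, x_{k−1} be pairwise distinct nodes of V and X = {x₁, …, x_{k−1}}, and assume |C| ≥ 2. Suppose that: (i) every probe (x₁, y, x₂, …, x_{k−1}) with y ∈ V \ X fails; (ii) for every ordered pair (a, b) of distinct nodes of X there exists a probe with first node a and last node b that fails; and (iii) for every x ∈ X, every y ∈ V \ X, and every arrangement of X \ {x} in the middle positions, the probe whose first node is x, whose middle entries are the nodes of X \ {x}, and whose last node is y fails. Then no node of X is compromised and every node of V \ X is compromised; that is, C = V \ X. -/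
variable {V : Type*}

/-- Suppose `|C| ≥ 2` and: (i) every probe `(x₁, y, x₂, …, x_{k-1})` with
`y ∉ X` fails; (ii) for every ordered pair of distinct nodes of `X` some probe
with those endpoints fails; (iii) every probe starting at a node `x i` of `X`,
ending at a node `y ∉ X` and whose middle entries are exactly `X \ {x i}`
fails.  Then the compromised nodes are exactly the nodes outside `X`. -/
theorem stmt5 [Fintype V] {k : ℕ} (hk : 3 ≤ k) (C : Set V)
    (x : Fin (k - 1) → V) (hx : Function.Injective x)
    (hC : 2 ≤ C.ncard)
    (h1 : ∀ y, y ∉ Set.range x → ¬ probeSucceeds (by omega) C (probe1 hk x y))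
    (h2 : ∀ a ∈ Set.range x, ∀ b ∈ Set.range x, a ≠ b →
      ∃ p : Fin k → V, Function.Injective p ∧ p ⟨0, by omega⟩ = a ∧
        p ⟨k - 1, by omega⟩ = b ∧ ¬ probeSucceeds (by omega) C p)
    (h3 : ∀ (i : Fin (k - 1)) (y : V), y ∉ Set.range x →
      ∀ p : Fin k → V, Function.Injective p →
        p ⟨0, by omega⟩ = x i → p ⟨k - 1, by omega⟩ = y →
        {v : V | ∃ j : Fin k, 0 < (j : ℕ) ∧ (j : ℕ) < k - 1 ∧ p j = v}
          = Set.range x \ {x i} →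
        ¬ probeSucceeds (by omega) C p) :
    C = (Set.range x)ᶜ := by
  classical
  -- two distinct compromised nodes
  obtain ⟨a, b, ha, hb, hab⟩ : ∃ a b, a ∈ C ∧ b ∈ C ∧ a ≠ b :=
    (Set.one_lt_ncard_iff C.toFinite).mp (by omega)
  -- two distinct compromised nodes can't both be in X
  have hXX : ∀ a b : V, a ∈ C → b ∈ C → a ∈ Set.range x → b ∈ Set.range x → a = b := by
    intro a b ha hb hax hbx
    by_contra hne
    obtain ⟨p, hpinj, hp0, hpl, hfail⟩ := h2 a hax b hbx hne
    exact hfail (Or.inr ⟨hp0 ▸ ha, hpl ▸ hb⟩)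
  -- a compromised node outside X
  obtain ⟨y₀, hy₀C, hy₀X⟩ : ∃ y₀, y₀ ∈ C ∧ y₀ ∉ Set.range x := by
    by_contra h
    push_neg at h
    exact hab (hXX a b ha hb (h a ha) (h b hb))
  -- no node of X is compromised
  have hXC : ∀ i : Fin (k - 1), x i ∉ C := by
    intro i hiC
    have hik := i.isLt
    -- the index map for the middle positions
    set m : ℕ → ℕ := fun n => if n - 1 < (i : ℕ) then n - 1 else n with hmdef
    have hm_lt : ∀ n, 0 < n → n < k - 1 → m n < k - 1 := by
      intro n h1 h2; simp only [hmdef]; split <;> omega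
    have hm_ne : ∀ n, 0 < n → n < k - 1 → m n ≠ (i : ℕ) := by
      intro n h1 h2; simp only [hmdef]; split <;> omega
    have hm_inj : ∀ n1 n2, 0 < n1 → n1 < k - 1 → 0 < n2 → n2 < k - 1 →
        m n1 = m n2 → n1 = n2 := by
      intro n1 n2 a1 a2 a3 a4; simp only [hmdef]; split <;> split <;> omega
    have hm_surj : ∀ t, t < k - 1 → t ≠ (i : ℕ) → ∃ n, 0 < n ∧ n < k - 1 ∧ m n = t := by
      intro t ht hti
      rcases Nat.lt_or_ge t (i : ℕ) with hc | hc
      · exact ⟨t + 1, by omega, by omega, by simp only [hmdef]; rw [if_pos (by omega)]; omega⟩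
      · exact ⟨t, by omega, by omega, by simp only [hmdef]; rw [if_neg (by omega)]⟩
    -- the probe
    set p : Fin k → V := fun j =>
      if (j : ℕ) = 0 then x i
      else if k - 1 ≤ (j : ℕ) then y₀
      else x ⟨m (j : ℕ) % (k - 1), Nat.mod_lt _ (by omega)⟩ with hpdef
    have hp0 : p ⟨0, by omega⟩ = x i := by simp [hpdef]
    have hpl : p ⟨k - 1, by omega⟩ = y₀ := by
      simp only [hpdef]
      rw [if_neg (by omega), if_pos (by omega)]
    have hpval : ∀ (j : Fin k) (hj1 : 0 < (j : ℕ)) (hj2 : (j : ℕ) < k - 1),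
        p j = x ⟨m (j : ℕ), hm_lt _ hj1 hj2⟩ := by
      intro j hj1 hj2
      simp only [hpdef]
      rw [if_neg (by omega), if_neg (by omega)]
      congr 1
      exact Fin.ext (Nat.mod_eq_of_lt (hm_lt _ hj1 hj2))
    have cls : ∀ j : Fin k, (j : ℕ) = 0 ∨ (j : ℕ) = k - 1 ∨
        (0 < (j : ℕ) ∧ (j : ℕ) < k - 1) := by
      intro j; have := j.isLt; omega
    have hval0 : ∀ j : Fin k, (j : ℕ) = 0 → p j = x i := by
      intro j hj; simp only [hpdef]; rw [if_pos hj]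
    have hvall : ∀ j : Fin k, (j : ℕ) = k - 1 → p j = y₀ := by
      intro j hj; simp only [hpdef]; rw [if_neg (by omega), if_pos (by omega)]
    have hpinj : Function.Injective p := by
      intro j1 j2 h
      apply Fin.ext
      rcases cls j1 with c1 | c1 | c1 <;> rcases cls j2 with c2 | c2 | c2
      · omega
      · rw [hval0 j1 c1, hvall j2 c2] at h
        exact (hy₀X ⟨i, h⟩).elim
      · rw [hval0 j1 c1, hpval j2 c2.1 c2.2] at h
        have := congrArg Fin.val (hx h)
        simp only [Fin.val_mk] at this
        exact (hm_ne _ c2.1 c2.2 this.symm).elim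
      · rw [hvall j1 c1, hval0 j2 c2] at h
        exact (hy₀X ⟨i, h.symm⟩).elim
      · omega
      · rw [hvall j1 c1, hpval j2 c2.1 c2.2] at h
        exact (hy₀X ⟨_, h.symm⟩).elim
      · rw [hpval j1 c1.1 c1.2, hval0 j2 c2] at h
        have := congrArg Fin.val (hx h)
        simp only [Fin.val_mk] at this
        exact (hm_ne _ c1.1 c1.2 this).elim
      · rw [hpval j1 c1.1 c1.2, hvall j2 c2] at h
        exact (hy₀X ⟨_, h⟩).elim
      · rw [hpval j1 c1.1 c1.2, hpval j2 c2.1 c2.2] at h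
        have := congrArg Fin.val (hx h)
        simp only [Fin.val_mk] at this
        exact hm_inj _ _ c1.1 c1.2 c2.1 c2.2 this
    have hmid : {v : V | ∃ j : Fin k, 0 < (j : ℕ) ∧ (j : ℕ) < k - 1 ∧ p j = v}
        = Set.range x \ {x i} := by
      ext v
      simp only [Set.mem_setOf_eq, Set.mem_diff, Set.mem_range, Set.mem_singleton_iff]
      constructor
      · rintro ⟨j, hj0, hjl, rfl⟩
        rw [hpval j hj0 hjl]
        refine ⟨⟨_, rfl⟩, ?_⟩
        intro hcon
        have := congrArg Fin.val (hx hcon)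
        simp only [Fin.val_mk] at this
        exact hm_ne _ hj0 hjl this
      · rintro ⟨⟨t, rfl⟩, hti⟩
        have htne : (t : ℕ) ≠ (i : ℕ) := fun h => hti (congrArg x (Fin.ext h))
        obtain ⟨n, hn0, hnl, hmn⟩ := hm_surj (t : ℕ) t.isLt htne
        refine ⟨⟨n, by omega⟩, hn0, hnl, ?_⟩
        rw [hpval ⟨n, by omega⟩ hn0 hnl]
        exact congrArg x (Fin.ext (by simpa using hmn))
    exact h3 i y₀ hy₀X p hpinj hp0 hpl hmid (Or.inr ⟨hp0 ▸ hiC, hpl ▸ hy₀C⟩)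
  -- conclude
  ext v
  simp only [Set.mem_compl_iff, Set.mem_range]
  constructor
  · rintro hvC ⟨i, rfl⟩
    exact hXC i hvC
  · intro hvX
    have hf := h1 v (by simpa using hvX)
    unfold probeSucceeds at hf
    push_neg at hf
    obtain ⟨⟨j, hjC⟩, -⟩ := hf
    by_cases hj1 : (j : ℕ) = 1
    · have : probe1 hk x v j = v := by
        unfold probe1
        rw [if_neg (by omega), if_pos hj1]
      rwa [this] at hjC
    · exfalso
      unfold probe1 at hjC
      split_ifs at hjC
      · exact hXC _ hjC
      · exact hXC _ hjC
end

section
/- Let V be a finite set with |V| = n and let k be an integer with 3 ≤ k ≤ n. For C ⊆ V let succ_C denote the success predicate on probes (injective k-tuples of V): succ_C(p) holds iff no entry of p lies in C or both the first and last entries of p lie in C. If C₁, C₂ ⊆ V satisfy 2 ≤ |Cᵢ| ≤ n − 1 for i = 1, 2 and succ_{C₁}(p) = succ_{C₂}(p) for every injective k-tuple p of V, then C₁ = C₂. (In other words, the set of compromised nodes of a naive denial-of-service attacker controlling at least 2 but fewer than n nodes is uniquely determined by the success/failure outcomes of probes.) -/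
set_option maxHeartbeats 1000000


variable {V : Type*}

lemma key_subset [Fintype V] {n k : ℕ} (hn : Fintype.card V = n)
    (hk : 3 ≤ k) (hkn : k ≤ n) (C₁ C₂ : Set V)
    (h₁ : 2 ≤ C₁.ncard) (h₂ : 2 ≤ C₂.ncard)
    (h : ∀ p : Fin k → V, Function.Injective p →
      (probeSucceeds (by linarith) C₁ p ↔ probeSucceeds (by linarith) C₂ p)) :
    C₁ ⊆ C₂ := by
  classical
  intro x hx
  by_contra hxC2
  obtain ⟨b, hb, hbx⟩ := Set.exists_ne_of_one_lt_ncard (show 1 < C₁.ncard by omega) x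
  obtain ⟨a, ha, hax⟩ := Set.exists_ne_of_one_lt_ncard (show 1 < C₂.ncard by omega) x
  have hn3 : 3 ≤ n := le_trans hk hkn
  have e : Fin n ≃ V := (Fintype.equivFinOfCardEq hn).symm
  set i0 : Fin n := ⟨0, by omega⟩ with hi0
  set i1 : Fin n := ⟨1, by omega⟩ with hi1
  set il : Fin n := ⟨k - 1, by omega⟩ with hil
  have h01 : i0 ≠ i1 := by simp [hi0, hi1, Fin.ext_iff]
  have h0l : i0 ≠ il := by simp [hi0, hil, Fin.ext_iff]; omega
  have h1l : i1 ≠ il := by simp [hi1, hil, Fin.ext_iff]; omega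
  -- place x at position 0
  set g1 : Fin n ≃ V := e.trans (Equiv.swap (e i0) x) with hg1
  have hg1x : g1 i0 = x := by simp [hg1]
  -- place b at position k-1
  set g2 : Fin n ≃ V := g1.trans (Equiv.swap (g1 il) b) with hg2
  have hxg1l : x ≠ g1 il := by
    intro hcon; exact h0l (g1.injective (hg1x.trans hcon))
  have hg2x : g2 i0 = x := by
    simp [hg2, hg1x, Equiv.swap_apply_of_ne_of_ne hxg1l hbx.symm]
  have hg2b : g2 il = b := by simp [hg2]
  by_cases hab : a = b
  · -- use g2; witness at position k-1
    set p : Fin k → V := fun i => g2 ⟨i.1, lt_of_lt_of_le i.2 hkn⟩ with hp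
    have hpinj : Function.Injective p := by
      intro i j hij
      have := g2.injective hij
      exact Fin.ext (by simpa [Fin.ext_iff] using this)
    have hp0 : p ⟨0, by omega⟩ = x := hg2x
    have hpl : p ⟨k - 1, by omega⟩ = b := hg2b
    have hs1 : probeSucceeds (show 0 < k by omega) C₁ p :=
      Or.inr ⟨by rw [hp0]; exact hx, by rw [hpl]; exact hb⟩
    have hs2 := (h p hpinj).mp hs1
    rcases hs2 with h' | h'
    · exact h' ⟨k - 1, by omega⟩ (by rw [hpl, ← hab]; exact ha)
    · exact hxC2 (by rw [hp0] at h'; exact h'.1)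
  · -- place a at position 1
    set g3 : Fin n ≃ V := g2.trans (Equiv.swap (g2 i1) a) with hg3
    have hxg21 : x ≠ g2 i1 := fun hcon => h01 (g2.injective (hg2x.trans hcon))
    have hbg21 : b ≠ g2 i1 := fun hcon => h1l (g2.injective (hcon.symm.trans hg2b.symm))
    have hg3x : g3 i0 = x := by
      simp [hg3, hg2x, Equiv.swap_apply_of_ne_of_ne hxg21 hax.symm]
    have hg3b : g3 il = b := by
      simp only [hg3, Equiv.trans_apply, hg2b]
      exact Equiv.swap_apply_of_ne_of_ne hbg21 (fun hcon => hab hcon.symm)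
    have hg3a : g3 i1 = a := by simp [hg3]
    set p : Fin k → V := fun i => g3 ⟨i.1, lt_of_lt_of_le i.2 hkn⟩ with hp
    have hpinj : Function.Injective p := by
      intro i j hij
      have := g3.injective hij
      exact Fin.ext (by simpa [Fin.ext_iff] using this)
    have hp0 : p ⟨0, by omega⟩ = x := hg3x
    have hpl : p ⟨k - 1, by omega⟩ = b := hg3b
    have hp1 : p ⟨1, by omega⟩ = a := hg3a
    have hs1 : probeSucceeds (show 0 < k by omega) C₁ p :=
      Or.inr ⟨by rw [hp0]; exact hx, by rw [hpl]; exact hb⟩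
    have hs2 := (h p hpinj).mp hs1
    rcases hs2 with h' | h'
    · exact h' ⟨1, by omega⟩ (by rw [hp1]; exact ha)
    · exact hxC2 (by rw [hp0] at h'; exact h'.1)

/-- The compromised set of a naive DoS attacker controlling at least `2` but
fewer than `n` nodes is uniquely determined by the success/failure outcomes of
all probes (injective `k`-tuples), where `3 ≤ k ≤ n`. -/
theorem stmt6 [Fintype V] {n k : ℕ} (hn : Fintype.card V = n)
    (hk : 3 ≤ k) (hkn : k ≤ n) (C₁ C₂ : Set V)
    (h₁ : 2 ≤ C₁.ncard ∧ C₁.ncard ≤ n - 1)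
    (h₂ : 2 ≤ C₂.ncard ∧ C₂.ncard ≤ n - 1)
    (h : ∀ p : Fin k → V, Function.Injective p →
      (probeSucceeds (by omega) C₁ p ↔ probeSucceeds (by omega) C₂ p)) :
    C₁ = C₂ := by
  apply Set.Subset.antisymm
  · exact key_subset hn hk hkn C₁ C₂ h₁.1 h₂.1 h
  · exact key_subset hn hk hkn C₂ C₁ h₂.1 h₁.1 (fun p hp => (h p hp).symm)
end

section
/- Let V be a finite set with |V| = n ≥ 3 and fix two distinct nodes x₁, x₂ ∈ V. Consider, for path length k = 3, the 3(n − 2) probes (x₁, y, x₂), (x₁, x₂, y), and (x₂, x₁, y) as y ranges over V \ {x₁, x₂}. If C₁, C₂ ⊆ V satisfy 2 ≤ |Cᵢ| ≤ n − 1 for i = 1, 2 and for each of these 3(n − 2) probes the success outcome under C₁ equals the success outcome under C₂, then C₁ = C₂. (Hence for paths of length 3 the compromised set can be detected using at most 3n probes.) -/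
variable {V : Type*}

/-- Success of the length-3 probe `(a, b, c)`. -/
def succ3 (C : Set V) (a b c : V) : Prop :=
  probeSucceeds (k := 3) (by omega) C ![a, b, c]

lemma succ3_iff (C : Set V) (a b c : V) :
    succ3 C a b c ↔ (a ∉ C ∧ b ∉ C ∧ c ∉ C) ∨ (a ∈ C ∧ c ∈ C) := by
  simp [succ3, probeSucceeds, Fin.forall_fin_succ]

lemma exists_outside [Finite V] {C : Set V} (hC : 2 ≤ C.ncard) {x₁ x₂ : V}
    (hx : x₁ ∉ C ∨ x₂ ∉ C) : ∃ y, y ≠ x₁ ∧ y ≠ x₂ ∧ y ∈ C := by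
  obtain ⟨a, b, ha, hb, hab⟩ := (Set.one_lt_ncard_iff C.toFinite).mp hC
  rcases hx with hx | hx
  · rcases eq_or_ne a x₂ with rfl | hax
    · refine ⟨b, ?_, ?_, hb⟩ <;> rintro rfl
      · exact hx hb
      · exact hab rfl
    · exact ⟨a, fun e => hx (e ▸ ha), hax, ha⟩
  · rcases eq_or_ne a x₁ with rfl | hax
    · refine ⟨b, ?_, ?_, hb⟩ <;> rintro rfl
      · exact hab rfl
      · exact hx hb
    · exact ⟨a, hax, fun e => hx (e ▸ ha), ha⟩


set_option maxHeartbeats 1000000 in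
/-- For path length `3`, the compromised set of a naive DoS attacker with
`2 ≤ |C| ≤ n - 1` is determined by the outcomes of the `3(n-2)` probes
`(x₁, y, x₂)`, `(x₁, x₂, y)` and `(x₂, x₁, y)` for `y ∉ {x₁, x₂}`. -/
theorem stmt7 [Fintype V] (hn : 3 ≤ Fintype.card V)
    (x₁ x₂ : V) (hx : x₁ ≠ x₂) (C₁ C₂ : Set V)
    (h₁ : 2 ≤ C₁.ncard ∧ C₁.ncard ≤ Fintype.card V - 1)
    (h₂ : 2 ≤ C₂.ncard ∧ C₂.ncard ≤ Fintype.card V - 1)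
    (h : ∀ y, y ≠ x₁ → y ≠ x₂ →
      (succ3 C₁ x₁ y x₂ ↔ succ3 C₂ x₁ y x₂) ∧
      (succ3 C₁ x₁ x₂ y ↔ succ3 C₂ x₁ x₂ y) ∧
      (succ3 C₁ x₂ x₁ y ↔ succ3 C₂ x₂ x₁ y)) :
    C₁ = C₂ := by
  simp only [succ3_iff] at h
  obtain ⟨hc₁, -⟩ := h₁
  obtain ⟨hc₂, -⟩ := h₂
  clear hn
  have key : (x₁ ∈ C₁ ↔ x₁ ∈ C₂) ∧ (x₂ ∈ C₁ ↔ x₂ ∈ C₂) := by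
    by_cases h11 : x₁ ∈ C₁ <;> by_cases h12 : x₂ ∈ C₁ <;>
      by_cases h21 : x₁ ∈ C₂ <;> by_cases h22 : x₂ ∈ C₂
    · -- (1, 1, 1, 1)
      exact ⟨iff_of_true h11 h21, iff_of_true h12 h22⟩
    · -- (1, 1, 1, 0)
      exfalso
      obtain ⟨y, hy1, hy2, hyC⟩ := exists_outside hc₂ (Or.inr h22)
      obtain ⟨q1, q2, q3⟩ := h y hy1 hy2
      clear h hx hc₁ hc₂ hy1 hy2
      simp_all
    · -- (1, 1, 0, 1)
      exfalso
      obtain ⟨y, hy1, hy2, hyC⟩ := exists_outside hc₂ (Or.inl h21)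
      obtain ⟨q1, q2, q3⟩ := h y hy1 hy2
      clear h hx hc₁ hc₂ hy1 hy2
      simp_all
    · -- (1, 1, 0, 0)
      exfalso
      obtain ⟨y, hy1, hy2, hyC⟩ := exists_outside hc₂ (Or.inl h21)
      obtain ⟨q1, q2, q3⟩ := h y hy1 hy2
      clear h hx hc₁ hc₂ hy1 hy2
      simp_all
    · -- (1, 0, 1, 1)
      exfalso
      obtain ⟨y, hy1, hy2, hyC⟩ := exists_outside hc₁ (Or.inr h12)
      obtain ⟨q1, q2, q3⟩ := h y hy1 hy2
      clear h hx hc₁ hc₂ hy1 hy2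
      simp_all
    · -- (1, 0, 1, 0)
      exact ⟨iff_of_true h11 h21, iff_of_false h12 h22⟩
    · -- (1, 0, 0, 1)
      exfalso
      obtain ⟨y, hy1, hy2, hyC⟩ := exists_outside hc₁ (Or.inr h12)
      obtain ⟨q1, q2, q3⟩ := h y hy1 hy2
      clear h hx hc₁ hc₂ hy1 hy2
      simp_all
    · -- (1, 0, 0, 0)
      exfalso
      obtain ⟨y, hy1, hy2, hyC⟩ := exists_outside hc₁ (Or.inr h12)
      obtain ⟨q1, q2, q3⟩ := h y hy1 hy2
      clear h hx hc₁ hc₂ hy1 hy2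
      simp_all
    · -- (0, 1, 1, 1)
      exfalso
      obtain ⟨y, hy1, hy2, hyC⟩ := exists_outside hc₁ (Or.inl h11)
      obtain ⟨q1, q2, q3⟩ := h y hy1 hy2
      clear h hx hc₁ hc₂ hy1 hy2
      simp_all
    · -- (0, 1, 1, 0)
      exfalso
      obtain ⟨y, hy1, hy2, hyC⟩ := exists_outside hc₁ (Or.inl h11)
      obtain ⟨q1, q2, q3⟩ := h y hy1 hy2
      clear h hx hc₁ hc₂ hy1 hy2
      simp_all
    · -- (0, 1, 0, 1)
      exact ⟨iff_of_false h11 h21, iff_of_true h12 h22⟩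
    · -- (0, 1, 0, 0)
      exfalso
      obtain ⟨y, hy1, hy2, hyC⟩ := exists_outside hc₁ (Or.inl h11)
      obtain ⟨q1, q2, q3⟩ := h y hy1 hy2
      clear h hx hc₁ hc₂ hy1 hy2
      simp_all
    · -- (0, 0, 1, 1)
      exfalso
      obtain ⟨y, hy1, hy2, hyC⟩ := exists_outside hc₁ (Or.inl h11)
      obtain ⟨q1, q2, q3⟩ := h y hy1 hy2
      clear h hx hc₁ hc₂ hy1 hy2
      simp_all
    · -- (0, 0, 1, 0)
      exfalso
      obtain ⟨y, hy1, hy2, hyC⟩ := exists_outside hc₂ (Or.inr h22)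
      obtain ⟨q1, q2, q3⟩ := h y hy1 hy2
      clear h hx hc₁ hc₂ hy1 hy2
      simp_all
    · -- (0, 0, 0, 1)
      exfalso
      obtain ⟨y, hy1, hy2, hyC⟩ := exists_outside hc₂ (Or.inl h21)
      obtain ⟨q1, q2, q3⟩ := h y hy1 hy2
      clear h hx hc₁ hc₂ hy1 hy2
      simp_all
    · -- (0, 0, 0, 0)
      exact ⟨iff_of_false h11 h21, iff_of_false h12 h22⟩
  obtain ⟨k1, k2⟩ := key
  ext z
  by_cases hz1 : z = x₁
  · subst hz1; clear h; tauto
  · by_cases hz2 : z = x₂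
    · subst hz2; clear h; tauto
    · obtain ⟨q1, q2, q3⟩ := h z hz1 hz2
      clear h hx hc₁ hc₂ hz1 hz2
      by_cases h11 : x₁ ∈ C₁ <;> by_cases h12 : x₂ ∈ C₁ <;>
        simp_all <;> tauto
end

section
/- Let u, a ≥ 0 with u + a ≤ 1 and u < 1, let K be a positive integer, and consider K i.i.d. trials, each of which is 'unsuccessful' with probability u, 'controlled' with probability a, and 'safe' with probability 1 − u − a (formally, the product probability measure on (Fin K → Ω) where Ω is a three-element outcome type with these probabilities). Then the probability of the event that there exists i < K such that trials 0, …, i−1 are all unsuccessful and trial i is controlled equals a·(1 − u^K)/(1 − u), i.e. equals a·∑_{i=0}^{K−1} u^i. (This is the probability that the attacker eventually controls the client's path within K circuit-creation attempts, where each attempt is independently unsuccessful with probability u and a permitted controlled circuit with probability a.) -/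
open MeasureTheory

/-- The distribution of a single circuit-creation attempt: outcome `0` is
'unsuccessful' (probability `u`), outcome `1` is 'controlled' (probability `a`)
and outcome `2` is 'safe' (probability `1 - u - a`). -/
noncomputable def trialPMF (u a : ℝ) (hu : 0 ≤ u) (ha : 0 ≤ a) (hua : u + a ≤ 1) :
    PMF (Fin 3) :=
  PMF.ofFintype
    ![ENNReal.ofReal u, ENNReal.ofReal a, 1 - (ENNReal.ofReal u + ENNReal.ofReal a)]
    (by
      have h : ENNReal.ofReal u + ENNReal.ofReal a ≤ 1 := by
        rw [← ENNReal.ofReal_add hu ha]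
        exact ENNReal.ofReal_le_one.mpr hua
      rw [Fin.sum_univ_three]
      simp only [Matrix.cons_val_zero, Matrix.cons_val_one, Matrix.head_cons,
        Matrix.cons_val_two, Matrix.tail_cons]
      exact add_tsub_cancel_of_le h)

/-- Under `K` i.i.d. trials, each 'unsuccessful' with probability `u`,
'controlled' with probability `a` and 'safe' otherwise, the probability that
some trial is controlled and all earlier trials are unsuccessful equals
`a (1 - u^K)/(1 - u) = a ∑_{i<K} uⁱ`. -/
theorem stmt9 (u a : ℝ) (hu : 0 ≤ u) (ha : 0 ≤ a) (hua : u + a ≤ 1) (hu1 : u < 1)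
    (K : ℕ) (hK : 0 < K) :
    (Measure.pi fun _ : Fin K => (trialPMF u a hu ha hua).toMeasure)
        {ω : Fin K → Fin 3 | ∃ i : Fin K, ω i = 1 ∧ ∀ j : Fin K, j < i → ω j = 0}
      = ENNReal.ofReal (a * ((1 - u ^ K) / (1 - u))) ∧
    (Measure.pi fun _ : Fin K => (trialPMF u a hu ha hua).toMeasure)
        {ω : Fin K → Fin 3 | ∃ i : Fin K, ω i = 1 ∧ ∀ j : Fin K, j < i → ω j = 0}
      = ENNReal.ofReal (a * ∑ i ∈ Finset.range K, u ^ i) := by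
  set μ := (trialPMF u a hu ha hua).toMeasure with hμ
  -- single-point masses
  have hμ0 : μ {(0 : Fin 3)} = ENNReal.ofReal u := by
    rw [hμ, PMF.toMeasure_apply_singleton _ _ (measurableSet_singleton _)]
    simp [trialPMF]
  have hμ1 : μ {(1 : Fin 3)} = ENNReal.ofReal a := by
    rw [hμ, PMF.toMeasure_apply_singleton _ _ (measurableSet_singleton _)]
    simp [trialPMF]
  have hμuniv : μ Set.univ = 1 := by
    rw [hμ]; simp
  -- the cylinder sets
  set S : Fin K → Fin K → Set (Fin 3) := fun i j =>
    if j = i then {1} else if j < i then {0} else Set.univ with hS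
  set A : Fin K → Set (Fin K → Fin 3) := fun i => Set.pi Set.univ (S i) with hA
  have hAdef : ∀ i ω, ω ∈ A i ↔ (ω i = 1 ∧ ∀ j : Fin K, j < i → ω j = 0) := by
    intro i ω
    constructor
    · intro h
      refine ⟨?_, ?_⟩
      · have := h i (Set.mem_univ i)
        simpa [hS] using this
      · intro j hj
        have := h j (Set.mem_univ j)
        have hji : j ≠ i := ne_of_lt hj
        simpa [hS, hji, hj] using this
    · rintro ⟨h1, h2⟩ j _
      by_cases hji : j = i
      · subst hji; simpa [hS] using h1
      · by_cases hjlt : j < i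
        · simpa [hS, hji, hjlt] using h2 j hjlt
        · simp [hS, hji, hjlt]
  have hEq : {ω : Fin K → Fin 3 | ∃ i : Fin K, ω i = 1 ∧ ∀ j : Fin K, j < i → ω j = 0}
      = ⋃ i : Fin K, A i := by
    ext ω
    simp only [Set.mem_setOf_eq, Set.mem_iUnion]
    constructor
    · rintro ⟨i, h⟩; exact ⟨i, (hAdef i ω).mpr h⟩
    · rintro ⟨i, h⟩; exact ⟨i, (hAdef i ω).mp h⟩
  have hMeas : ∀ i, MeasurableSet (A i) := by
    intro i
    exact MeasurableSet.univ_pi fun j => by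
      by_cases h1 : j = i <;> by_cases h2 : j < i <;>
        simp [hS, h1, h2, measurableSet_singleton]
  have hDisj : Pairwise (Function.onFun Disjoint A) := by
    intro i i' hne
    rw [Function.onFun, Set.disjoint_left]
    intro ω hi hi'
    rcases lt_or_gt_of_ne hne with h | h
    · have h1 := ((hAdef i ω).mp hi).1
      have h0 := ((hAdef i' ω).mp hi').2 i h
      rw [h1] at h0; exact absurd h0 (by decide)
    · have h1 := ((hAdef i' ω).mp hi').1
      have h0 := ((hAdef i ω).mp hi).2 i' h
      rw [h1] at h0; exact absurd h0 (by decide)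
  -- measure of each cylinder
  have hAi : ∀ i : Fin K, (Measure.pi fun _ : Fin K => μ) (A i)
      = ENNReal.ofReal a * ENNReal.ofReal u ^ (i : ℕ) := by
    intro i
    rw [hA, Measure.pi_pi]
    have : ∀ j : Fin K, μ (S i j) =
        (fun n : ℕ => if n = (i : ℕ) then ENNReal.ofReal a
          else if n < (i : ℕ) then ENNReal.ofReal u else 1) (j : ℕ) := by
      intro j
      by_cases h1 : j = i
      · subst h1; simp [hS, hμ1]
      · have h1' : (j : ℕ) ≠ (i : ℕ) := fun h => h1 (Fin.ext h)
        by_cases h2 : j < i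
        · have h2' : (j : ℕ) < (i : ℕ) := h2
          simp [hS, h1, h2, h1', h2', hμ0]
        · have h2' : ¬ ((j : ℕ) < (i : ℕ)) := h2
          simp [hS, h1, h2, h1', h2', hμuniv]
    rw [Finset.prod_congr rfl (fun j _ => this j)]
    rw [Fin.prod_univ_eq_prod_range (fun n : ℕ => if n = (i : ℕ) then ENNReal.ofReal a else if n < (i : ℕ) then ENNReal.ofReal u else 1)]
    have hik : (i : ℕ) + 1 ≤ K := i.isLt
    rw [← Finset.prod_range_mul_prod_Ico _ hik]
    have h2 : ∏ n ∈ Finset.Ico ((i : ℕ) + 1) K,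
        (if n = (i : ℕ) then ENNReal.ofReal a
          else if n < (i : ℕ) then ENNReal.ofReal u else 1) = 1 := by
      apply Finset.prod_eq_one
      intro n hn
      rw [Finset.mem_Ico] at hn
      have : ¬ n = (i : ℕ) := by omega
      have h' : ¬ n < (i : ℕ) := by omega
      simp [this, h']
    rw [h2, mul_one, Finset.prod_range_succ]
    have h3 : ∏ n ∈ Finset.range (i : ℕ),
        (if n = (i : ℕ) then ENNReal.ofReal a
          else if n < (i : ℕ) then ENNReal.ofReal u else 1)
        = ENNReal.ofReal u ^ (i : ℕ) := by
      rw [Finset.prod_congr rfl (fun n hn => ?_), Finset.prod_const,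
        Finset.card_range]
      rw [Finset.mem_range] at hn
      have : ¬ n = (i : ℕ) := by omega
      simp [this, hn]
    rw [h3]
    simp [mul_comm]
  -- total measure
  have hTotal : (Measure.pi fun _ : Fin K => μ)
      {ω : Fin K → Fin 3 | ∃ i : Fin K, ω i = 1 ∧ ∀ j : Fin K, j < i → ω j = 0}
      = ENNReal.ofReal (a * ∑ i ∈ Finset.range K, u ^ i) := by
    rw [hEq, measure_iUnion hDisj hMeas, tsum_fintype]
    rw [Finset.sum_congr rfl (fun i _ => hAi i)]
    rw [Fin.sum_univ_eq_sum_range (fun n => ENNReal.ofReal a * ENNReal.ofReal u ^ n)]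
    rw [Finset.mul_sum, ENNReal.ofReal_sum_of_nonneg]
    · apply Finset.sum_congr rfl
      intro n _
      rw [ENNReal.ofReal_mul ha, ENNReal.ofReal_pow hu]
    · intro n _
      exact mul_nonneg ha (pow_nonneg hu n)
  have hgeom : (1 - u ^ K) / (1 - u) = ∑ i ∈ Finset.range K, u ^ i := by
    rw [geom_sum_eq (ne_of_lt hu1)]
    rw [div_eq_div_iff (by linarith) (sub_ne_zero.mpr (ne_of_lt hu1))]
    ring
  exact ⟨by rw [hTotal, hgeom], hTotal⟩
end
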